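/- arXiv:1212.0048 — 2 statements merged into one kernel-verified Lean document; each statement's English description precedes it below -/
import Mathlib

section
/- There is a unique real number β ∈ (0,1) satisfying 1/p^β + 1/q^β = 1, and for this β one has W(U) ≤ U^β for every integer U ≥ 1. -/
/-- A strictly chained `(p,q)`-ary partition of `U`: a finite strictly decreasing
list of positive integers of the form `p^a * q^b`, each part divisible by the next,
summing to `U`. -/
def IsSCPartition (p q U : ℕ) (l : List ℕ) : Prop :=
  (∀ x ∈ l, ∃ a b : ℕ, x = p ^ a * q ^ b) ∧
  List.Chain' (fun x y => y ∣ x ∧ y < x) l ∧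
  l.sum = U

/-- The set of strictly chained `(p,q)`-ary partitions of `U`. -/
def Omega (p q U : ℕ) : Set (List ℕ) := {l | IsSCPartition p q U l}

/-- The subset of `Omega p q U` of partitions with no part equal to `1`. -/
def OmegaStar (p q U : ℕ) : Set (List ℕ) := {l | IsSCPartition p q U l ∧ 1 ∉ l}

/-- `W p q U` is the number of strictly chained `(p,q)`-ary partitions of `U`. -/
noncomputable def W (p q U : ℕ) : ℕ := (Omega p q U).ncard

/-- `Wstar p q U` is the number of strictly chained `(p,q)`-ary partitions of `U`
with no part equal to `1`. -/
noncomputable def Wstar (p q U : ℕ) : ℕ := (OmegaStar p q U).ncard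

instance : IsTrans ℕ (fun x y => y ∣ x ∧ y < x) :=
  ⟨fun _ _ _ h1 h2 => ⟨h2.1.trans h1.1, h2.2.trans h1.2⟩⟩

lemma scp_pairwise {l : List ℕ} (h : List.Chain' (fun x y => y ∣ x ∧ y < x) l) :
    l.Pairwise (fun x y => y ∣ x ∧ y < x) := List.isChain_iff_pairwise.mp h

lemma scp_parts_pos {p q U : ℕ} (hp : 0 < p) (hq : 0 < q) {l : List ℕ}
    (hl : IsSCPartition p q U l) : ∀ x ∈ l, 0 < x := by
  intro x hx
  obtain ⟨a, b, rfl⟩ := hl.1 x hx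
  positivity

lemma omega_finite (p q U : ℕ) : (Omega p q U).Finite := by
  have hinj : Set.InjOn List.toFinset (Omega p q U) := by
    intro l1 h1 l2 h2 he
    have hp1 := scp_pairwise h1.2.1
    have hp2 := scp_pairwise h2.2.1
    have hn1 : l1.Nodup := hp1.imp fun h => (h.2.ne')
    have hn2 : l2.Nodup := hp2.imp fun h => (h.2.ne')
    haveI : IsAntisymm ℕ (fun x y : ℕ => x > y) :=
      ⟨fun a b h1 h2 => absurd h1 (not_lt.2 h2.le)⟩
    exact List.Perm.eq_of_pairwise (fun a b _ _ h1 h2 => absurd h1 (not_lt.2 h2.le))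
      (hp1.imp fun h => h.2) (hp2.imp fun h => h.2) (List.perm_of_nodup_nodup_toFinset_eq hn1 hn2 he)
  have hsub : List.toFinset '' (Omega p q U) ⊆ ↑((Finset.range (U + 1)).powerset) := by
    rintro s ⟨l, hl, rfl⟩
    simp only [Finset.coe_powerset, Set.mem_preimage, Set.mem_powerset_iff,
      Finset.coe_range]
    intro x hx
    simp only [List.coe_toFinset, Set.mem_setOf_eq] at hx
    have hx' : x ≤ l.sum := List.single_le_sum (fun y hy => Nat.zero_le y) x hx
    rw [hl.2.2] at hx'
    simp only [Set.mem_Iio]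
    omega
  exact Set.Finite.of_finite_image
    (Set.Finite.subset ((Finset.range (U + 1)).powerset.finite_toSet) hsub) hinj

lemma omegaStar_finite (p q U : ℕ) : (OmegaStar p q U).Finite :=
  (omega_finite p q U).subset (fun l hl => hl.1)

lemma omega_zero (p q : ℕ) (hp : 0 < p) (hq : 0 < q) : Omega p q 0 = {[]} := by
  ext l
  simp only [Omega, Set.mem_setOf_eq, Set.mem_singleton_iff]
  constructor
  · intro hl
    have hpos := scp_parts_pos hp hq hl
    have hsum := hl.2.2
    cases l with
    | nil => rfl
    | cons a t =>
      exfalso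
      have : 0 < a := hpos a (by simp)
      have : a + t.sum = 0 := by simpa using hsum
      omega
  · rintro rfl
    exact ⟨by simp, List.isChain_nil, rfl⟩

lemma W_zero (p q : ℕ) (hp : 0 < p) (hq : 0 < q) : W p q 0 = 1 := by
  rw [W, omega_zero p q hp hq, Set.ncard_singleton]

lemma omegaStar_zero (p q : ℕ) (hp : 0 < p) (hq : 0 < q) : OmegaStar p q 0 = {[]} := by
  ext l
  simp only [OmegaStar, Set.mem_setOf_eq, Set.mem_singleton_iff]
  constructor
  · intro hl
    have := omega_zero p q hp hq
    have : l ∈ ({[]} : Set (List ℕ)) := this ▸ (hl.1 : l ∈ Omega p q 0)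
    simpa using this
  · rintro rfl
    exact ⟨⟨by simp, List.isChain_nil, rfl⟩, by simp⟩

lemma Wstar_zero (p q : ℕ) (hp : 0 < p) (hq : 0 < q) : Wstar p q 0 = 1 := by
  rw [Wstar, omegaStar_zero p q hp hq, Set.ncard_singleton]

lemma Wstar_one (p q : ℕ) (hp : 0 < p) (hq : 0 < q) : Wstar p q 1 = 0 := by
  rw [Wstar, Set.ncard_eq_zero (omegaStar_finite p q 1)]
  ext l
  simp only [OmegaStar, Set.mem_setOf_eq, Set.mem_empty_iff_false, iff_false]
  rintro ⟨hl, h1⟩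
  have hpos := scp_parts_pos hp hq hl
  have hsum := hl.2.2
  cases l with
  | nil => simp at hsum
  | cons a t =>
    have ha : 0 < a := hpos a (by simp)
    have ha1 : a ≠ 1 := fun h => h1 (by simp [h])
    have hts : 0 ≤ t.sum := Nat.zero_le _
    have : a + t.sum = 1 := by simpa using hsum
    omega

/-- If `1 ∈ l` then `l = l.erase 1 ++ [1]` and `1 ∉ l.erase 1`. -/
lemma one_last {p q U : ℕ} (hp : 0 < p) (hq : 0 < q) {l : List ℕ}
    (hl : IsSCPartition p q U l) (h1 : 1 ∈ l) :
    l = l.erase 1 ++ [1] ∧ 1 ∉ l.erase 1 := by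
  obtain ⟨s, t, rfl⟩ := List.append_of_mem h1
  have hpw := scp_pairwise hl.2.1
  rw [List.pairwise_append] at hpw
  obtain ⟨hs, hst, hcross⟩ := hpw
  have ht : t = [] := by
    rw [List.eq_nil_iff_forall_not_mem]
    intro y hy
    have := (List.pairwise_cons.mp hst).1 y hy
    have hypos : 0 < y := scp_parts_pos hp hq hl y (by simp [hy])
    omega
  subst ht
  have h1s : 1 ∉ s := by
    intro hmem
    have := hcross 1 hmem 1 (by simp)
    omega
  have he : (s ++ [1]).erase 1 = s := by
    rw [List.erase_append_right _ h1s]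
    simp
  rw [he]
  exact ⟨rfl, h1s⟩

lemma W_le_split (p q U : ℕ) (hp : 0 < p) (hq : 0 < q) (hU : 1 ≤ U) :
    W p q U ≤ Wstar p q U + Wstar p q (U - 1) := by
  classical
  set B : Set (List ℕ) := {l ∈ Omega p q U | 1 ∈ l} with hB
  have hsplit : Omega p q U ⊆ OmegaStar p q U ∪ B := by
    intro l hl
    by_cases h : 1 ∈ l
    · exact Or.inr ⟨hl, h⟩
    · exact Or.inl ⟨hl, h⟩
  have hBfin : B.Finite := (omega_finite p q U).subset (fun l hl => hl.1)
  have hcard : W p q U ≤ Wstar p q U + B.ncard := by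
    calc W p q U ≤ (OmegaStar p q U ∪ B).ncard :=
          Set.ncard_le_ncard hsplit ((omegaStar_finite p q U).union hBfin)
      _ ≤ Wstar p q U + B.ncard := Set.ncard_union_le _ _
  refine hcard.trans (Nat.add_le_add_left ?_ _)
  -- B.ncard ≤ Wstar p q (U-1) via erase 1
  have hinj : Set.InjOn (fun l : List ℕ => l.erase 1) B := by
    intro l1 hl1 l2 hl2 he
    have h1 := one_last hp hq hl1.1 hl1.2
    have h2 := one_last hp hq hl2.1 hl2.2
    rw [h1.1, h2.1]
    simp only at he
    rw [he]
  have hsub : (fun l : List ℕ => l.erase 1) '' B ⊆ OmegaStar p q (U - 1) := by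
    rintro s ⟨l, hl, rfl⟩
    obtain ⟨hdecomp, hne⟩ := one_last hp hq hl.1 hl.2
    refine ⟨⟨?_, ?_, ?_⟩, hne⟩
    · intro x hx
      exact hl.1.1 x (by rw [hdecomp]; exact List.mem_append_left _ hx)
    · exact hl.1.2.1.prefix ⟨[1], hdecomp.symm⟩
    · show (l.erase 1).sum = U - 1
      have := hl.1.2.2
      rw [hdecomp] at this
      simp at this
      omega
  calc B.ncard = ((fun l : List ℕ => l.erase 1) '' B).ncard :=
        (Set.ncard_image_of_injOn hinj).symm
    _ ≤ Wstar p q (U - 1) := Set.ncard_le_ncard hsub (omegaStar_finite p q (U - 1))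

/-- the last element divides every element -/
lemma last_dvd {l : List ℕ} (hne : l ≠ [])
    (h : List.Chain' (fun x y => y ∣ x ∧ y < x) l) :
    ∀ x ∈ l, l.getLast hne ∣ x := by
  have hpw := scp_pairwise h
  intro x hx
  rcases List.mem_append.mp ((List.dropLast_append_getLast hne) ▸ hx) with h' | h'
  · have hpw' := (List.dropLast_append_getLast hne) ▸ hpw
    rw [List.pairwise_append] at hpw'
    exact (hpw'.2.2 x h' _ (by simp)).1
  · simp at h'
    rw [h']

/-- dividing all parts by r -/
lemma map_div_sum (r : ℕ) (hr : 0 < r) :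
    ∀ (l : List ℕ), (∀ x ∈ l, r ∣ x) → r * (l.map (· / r)).sum = l.sum := by
  intro l
  induction l with
  | nil => simp
  | cons a t ih =>
    intro h
    simp only [List.map_cons, List.sum_cons, Nat.mul_add]
    rw [ih (fun x hx => h x (by simp [hx])), Nat.mul_div_cancel' (h a (by simp))]

lemma map_div_map_mul (r : ℕ) (hr : 0 < r) :
    ∀ (l : List ℕ), (∀ x ∈ l, r ∣ x) → (l.map (· / r)).map (· * r) = l := by
  intro l
  induction l with
  | nil => simp
  | cons a t ih =>
    intro h
    simp only [List.map_cons]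
    rw [ih (fun x hx => h x (by simp [hx])), Nat.div_mul_cancel (h a (by simp))]

section
variable {p q : ℕ} (hp : 1 < p) (hq : 1 < q) (hpq : Nat.Coprime p q)

/-- partitions with all parts divisible by p inject into Omega (V/p); counted. -/
lemma ncard_dvd_le (hp : 1 < p) (hq : 1 < q) (hpq : Nat.Coprime p q) (V : ℕ)
    (r : ℕ) (hr : r = p ∨ r = q) :
    ({l ∈ OmegaStar p q V | ∀ x ∈ l, r ∣ x} : Set (List ℕ)).ncard ≤
      if r ∣ V then W p q (V / r) else 0 := by
  classical
  have hr1 : 1 < r := by rcases hr with rfl | rfl <;> omega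
  set C : Set (List ℕ) := {l ∈ OmegaStar p q V | ∀ x ∈ l, r ∣ x} with hC
  by_cases hdvd : r ∣ V
  · simp only [hdvd, if_true]
    have hinj : Set.InjOn (fun l : List ℕ => l.map (· / r)) C := by
      intro l1 h1 l2 h2 he
      have e1 := map_div_map_mul r (by omega) l1 h1.2
      have e2 := map_div_map_mul r (by omega) l2 h2.2
      simp only at he
      rw [← e1, he, e2]
    have hsub : (fun l : List ℕ => l.map (· / r)) '' C ⊆ Omega p q (V / r) := by
      rintro s ⟨l, hl, rfl⟩
      obtain ⟨⟨⟨hparts, hchain, hsum⟩, h1⟩, hdall⟩ := hl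
      refine ⟨?_, ?_, ?_⟩
      · intro x hx
        rw [List.mem_map] at hx
        obtain ⟨y, hy, rfl⟩ := hx
        obtain ⟨a, b, rfl⟩ := hparts y hy
        have hpd : r ∣ p ^ a * q ^ b := hdall _ hy
        rcases hr with rfl | rfl
        · have ha : a ≠ 0 := by
            rintro rfl
            simp only [pow_zero, one_mul] at hpd
            have := Nat.eq_one_of_dvd_coprimes (hpq.pow_right b) (dvd_refl r) hpd
            omega
          obtain ⟨a', rfl⟩ := Nat.exists_eq_succ_of_ne_zero ha
          refine ⟨a', b, ?_⟩
          rw [pow_succ]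
          rw [Nat.mul_comm (r ^ a') r, Nat.mul_assoc, Nat.mul_div_cancel_left _ (by omega)]
        · have hb : b ≠ 0 := by
            rintro rfl
            simp only [pow_zero, mul_one] at hpd
            have := Nat.eq_one_of_dvd_coprimes (hpq.symm.pow_right a) (dvd_refl r) hpd
            omega
          obtain ⟨b', rfl⟩ := Nat.exists_eq_succ_of_ne_zero hb
          refine ⟨a, b', ?_⟩
          rw [pow_succ, ← Nat.mul_assoc, Nat.mul_comm (p ^ a * r ^ b') r,
            Nat.mul_div_cancel_left _ (by omega)]
      · show List.IsChain _ (List.map _ l)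
        rw [List.isChain_map]
        refine List.Pairwise.isChain ?_
        refine List.Pairwise.imp_of_mem ?_ (scp_pairwise hchain)
        intro x y hx hy hr
        obtain ⟨x', rfl⟩ := hdall x hx
        obtain ⟨y', rfl⟩ := hdall y hy
        obtain ⟨hd, hlt⟩ := hr
        have hp0 : 0 < r := by omega
        constructor
        · rw [Nat.mul_div_cancel_left _ hp0, Nat.mul_div_cancel_left _ hp0]
          exact (mul_dvd_mul_iff_left (by omega : r ≠ 0)).mp hd
        · rw [Nat.mul_div_cancel_left _ hp0, Nat.mul_div_cancel_left _ hp0]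
          exact lt_of_mul_lt_mul_left hlt (Nat.zero_le r)
      · show (l.map (· / r)).sum = V / r
        have := map_div_sum r (by omega) l hdall
        rw [hsum] at this
        exact (Nat.div_eq_of_eq_mul_right (by omega) this.symm).symm
    calc C.ncard = ((fun l : List ℕ => l.map (· / r)) '' C).ncard :=
          (Set.ncard_image_of_injOn hinj).symm
      _ ≤ W p q (V / r) := Set.ncard_le_ncard hsub (omega_finite p q (V / r))
  · simp only [hdvd, if_false]
    have hCe : C = ∅ := by
      rw [Set.eq_empty_iff_forall_notMem]
      rintro l ⟨hl, hdall⟩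
      exact hdvd (hl.1.2.2 ▸ List.dvd_sum hdall)
    simp [hCe]

end

lemma Wstar_le {p q : ℕ} (hp : 1 < p) (hq : 1 < q) (hpq : Nat.Coprime p q) (V : ℕ)
    (hV : 1 ≤ V) :
    Wstar p q V ≤ (if p ∣ V then W p q (V / p) else 0) +
      (if q ∣ V then W p q (V / q) else 0) := by
  classical
  set Cp : Set (List ℕ) := {l ∈ OmegaStar p q V | ∀ x ∈ l, p ∣ x} with hCp
  set Cq : Set (List ℕ) := {l ∈ OmegaStar p q V | ∀ x ∈ l, q ∣ x} with hCq
  have hsub : OmegaStar p q V ⊆ Cp ∪ Cq := by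
    intro l hl
    have hne : l ≠ [] := by
      rintro rfl
      have := hl.1.2.2
      simp at this
      omega
    have hdall := last_dvd hne hl.1.2.1
    have hmem : l.getLast hne ∈ l := List.getLast_mem hne
    obtain ⟨a, b, hab⟩ := hl.1.1 _ hmem
    have hne1 : l.getLast hne ≠ 1 := fun h => hl.2 (h ▸ hmem)
    have : p ∣ l.getLast hne ∨ q ∣ l.getLast hne := by
      rcases Nat.eq_zero_or_pos a with rfl | ha
      · rcases Nat.eq_zero_or_pos b with rfl | hb
        · exfalso; apply hne1; rw [hab]; simp
        · right; rw [hab]; simp only [pow_zero, one_mul]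
          exact dvd_pow_self q (by omega)
      · left; rw [hab]
        exact Dvd.dvd.mul_right (dvd_pow_self p (by omega)) _
    rcases this with h | h
    · exact Or.inl ⟨hl, fun x hx => h.trans (hdall x hx)⟩
    · exact Or.inr ⟨hl, fun x hx => h.trans (hdall x hx)⟩
  have hCpf : Cp.Finite := (omegaStar_finite p q V).subset (fun l hl => hl.1)
  have hCqf : Cq.Finite := (omegaStar_finite p q V).subset (fun l hl => hl.1)
  calc Wstar p q V ≤ (Cp ∪ Cq).ncard := Set.ncard_le_ncard hsub (hCpf.union hCqf)
    _ ≤ Cp.ncard + Cq.ncard := Set.ncard_union_le _ _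
    _ ≤ _ := Nat.add_le_add (ncard_dvd_le hp hq hpq V p (Or.inl rfl))
        (ncard_dvd_le hp hq hpq V q (Or.inr rfl))


lemma beta_exists (p q : ℕ) (hp : 1 < p) (hq : 1 < q) (hpq : Nat.Coprime p q) :
    ∃! β : ℝ, β ∈ Set.Ioo (0 : ℝ) 1 ∧
      1 / (p : ℝ) ^ β + 1 / (q : ℝ) ^ β = 1 := by
  have hp1 : (1 : ℝ) < p := by exact_mod_cast hp
  have hq1 : (1 : ℝ) < q := by exact_mod_cast hq
  set f : ℝ → ℝ := fun x => 1 / (p : ℝ) ^ x + 1 / (q : ℝ) ^ x with hf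
  have hcont : Continuous f := by
    apply Continuous.add
    · exact continuous_const.div (continuous_iff_continuousAt.mpr fun x =>
        Real.continuousAt_const_rpow (by positivity)) (fun x => by positivity)
    · exact continuous_const.div (continuous_iff_continuousAt.mpr fun x =>
        Real.continuousAt_const_rpow (by positivity)) (fun x => by positivity)
  have hanti : StrictAnti f := by
    intro x y hxy
    have h1 : (p : ℝ) ^ x < (p : ℝ) ^ y := Real.rpow_lt_rpow_left_iff hp1 |>.mpr hxy
    have h2 : (q : ℝ) ^ x < (q : ℝ) ^ y := Real.rpow_lt_rpow_left_iff hq1 |>.mpr hxy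
    have hpx : (0:ℝ) < (p : ℝ) ^ x := by positivity
    have hqx : (0:ℝ) < (q : ℝ) ^ x := by positivity
    have := one_div_lt_one_div_of_lt hpx h1
    have := one_div_lt_one_div_of_lt hqx h2
    simp only [hf]
    linarith
  have hf0 : f 0 = 2 := by simp [hf]; norm_num
  have hf1 : f 1 < 1 := by
    have hpne : p ≠ q := by
      rintro rfl
      have := Nat.eq_one_of_dvd_coprimes hpq (dvd_refl p) (dvd_refl p)
      omega
    simp only [hf, Real.rpow_one]
    have hp2 : (2:ℝ) ≤ p := by exact_mod_cast hp
    have hq2 : (2:ℝ) ≤ q := by exact_mod_cast hq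
    have : 3 ≤ p ∨ 3 ≤ q := by omega
    rcases this with h3 | h3
    · have hp3 : (3:ℝ) ≤ p := by exact_mod_cast h3
      have : 1 / (p:ℝ) ≤ 1/3 := by
        rw [div_le_div_iff₀ (by linarith) (by norm_num)]; linarith
      have : 1 / (q:ℝ) ≤ 1/2 := by
        rw [div_le_div_iff₀ (by linarith) (by norm_num)]; linarith
      linarith
    · have hq3 : (3:ℝ) ≤ q := by exact_mod_cast h3
      have : 1 / (q:ℝ) ≤ 1/3 := by
        rw [div_le_div_iff₀ (by linarith) (by norm_num)]; linarith
      have : 1 / (p:ℝ) ≤ 1/2 := by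
        rw [div_le_div_iff₀ (by linarith) (by norm_num)]; linarith
      linarith
  have hmem : (1:ℝ) ∈ Set.Ioo (f 1) (f 0) := ⟨hf1, by rw [hf0]; norm_num⟩
  have hIVT := intermediate_value_Ioo' (by norm_num : (0:ℝ) ≤ 1) hcont.continuousOn
  obtain ⟨β, hβmem, hβeq⟩ := hIVT hmem
  refine ⟨β, ⟨hβmem, hβeq⟩, ?_⟩
  rintro γ ⟨hγmem, hγeq⟩
  refine hanti.injective ?_
  have h1 : f γ = 1 := hγeq
  rw [h1, hβeq]

lemma pair_term_bound {p q : ℕ} (hp : 1 < p) (hq : 1 < q) {β : ℝ}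
    (hβ : β ∈ Set.Ioo (0:ℝ) 1) {U : ℕ} (hU : 2 ≤ U)
    (IH : ∀ V : ℕ, V < U → 1 ≤ V → (W p q V : ℝ) ≤ (V : ℝ) ^ β)
    (r : ℕ) (hr : 1 < r) :
    ((if r ∣ U then W p q (U / r) else 0 : ℕ) : ℝ) +
      ((if r ∣ (U - 1) then W p q ((U - 1) / r) else 0 : ℕ) : ℝ) ≤
      (U : ℝ) ^ β / (r : ℝ) ^ β := by
  have hr0 : (0:ℝ) < (r:ℝ) := by positivity
  have hU0 : (0:ℝ) < (U:ℝ) := by positivity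
  have hrb : (0:ℝ) < (r:ℝ) ^ β := Real.rpow_pos_of_pos hr0 β
  have hnotboth : ¬(r ∣ U ∧ r ∣ (U - 1)) := by
    rintro ⟨h1, h2⟩
    have : r ∣ U - (U - 1) := Nat.dvd_sub h1 h2
    have hU1 : U - (U - 1) = 1 := by omega
    rw [hU1] at this
    have := Nat.dvd_one.mp this
    omega
  by_cases h1 : r ∣ U
  · have h2 : ¬ r ∣ (U - 1) := fun h => hnotboth ⟨h1, h⟩
    simp only [h1, h2, if_true, if_false, Nat.cast_zero, add_zero]
    have hle : r ≤ U := Nat.le_of_dvd (by omega) h1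
    have hlt : U / r < U := Nat.div_lt_self (by omega) hr
    have hge : 1 ≤ U / r := (Nat.one_le_div_iff (by omega)).mpr hle
    have := IH (U / r) hlt hge
    refine this.trans ?_
    have hcast : ((U / r : ℕ) : ℝ) = (U : ℝ) / (r : ℝ) := by
      rw [Nat.cast_div h1 (by exact_mod_cast (show r ≠ 0 by omega))]
    rw [hcast, Real.div_rpow (le_of_lt hU0) (le_of_lt hr0)]
  · simp only [h1, if_false, Nat.cast_zero, zero_add]
    by_cases h2 : r ∣ (U - 1)
    · simp only [h2, if_true]
      have hU1 : 1 ≤ U - 1 := by omega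
      have hle : r ≤ U - 1 := Nat.le_of_dvd (by omega) h2
      have hlt : (U - 1) / r < U := lt_of_le_of_lt (Nat.div_le_self _ _) (by omega)
      have hge : 1 ≤ (U - 1) / r := (Nat.one_le_div_iff (by omega)).mpr hle
      have := IH ((U - 1) / r) hlt hge
      refine this.trans ?_
      have hcast : (((U - 1) / r : ℕ) : ℝ) ≤ (U : ℝ) / (r : ℝ) := by
        have h3 : (((U - 1) / r : ℕ) : ℝ) = ((U - 1 : ℕ) : ℝ) / (r : ℝ) := by
          rw [Nat.cast_div h2 (by exact_mod_cast (show r ≠ 0 by omega))]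
        rw [h3]
        gcongr
        exact_mod_cast Nat.sub_le U 1
      calc (((U - 1) / r : ℕ) : ℝ) ^ β ≤ ((U : ℝ) / (r : ℝ)) ^ β :=
            Real.rpow_le_rpow (by positivity) hcast (le_of_lt hβ.1)
        _ = (U : ℝ) ^ β / (r : ℝ) ^ β := Real.div_rpow (le_of_lt hU0) (le_of_lt hr0) β
    · simp only [h2, if_false, Nat.cast_zero]
      positivity

lemma main_bound {p q : ℕ} (hp : 1 < p) (hq : 1 < q) (hpq : Nat.Coprime p q)
    {β : ℝ} (hβ : β ∈ Set.Ioo (0:ℝ) 1)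
    (heq : 1 / (p : ℝ) ^ β + 1 / (q : ℝ) ^ β = 1) :
    ∀ U : ℕ, 1 ≤ U → (W p q U : ℝ) ≤ (U : ℝ) ^ β := by
  intro U
  induction U using Nat.strong_induction_on with
  | _ U IH =>
    intro hU
    rcases eq_or_lt_of_le hU with h1 | h2
    · -- U = 1
      have hU1 : U = 1 := h1.symm
      subst hU1
      have : W p q 1 ≤ 1 := by
        have := W_le_split p q 1 (by omega) (by omega) le_rfl
        rw [Wstar_one p q (by omega) (by omega)] at this
        simpa [Wstar_zero p q (by omega) (by omega)] using this
      calc (W p q 1 : ℝ) ≤ 1 := by exact_mod_cast this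
        _ = (1 : ℝ) ^ β := (Real.one_rpow β).symm
        _ = ((1 : ℕ) : ℝ) ^ β := by norm_num
    · -- U ≥ 2
      have hU2 : 2 ≤ U := h2
      have IH' : ∀ V : ℕ, V < U → 1 ≤ V → (W p q V : ℝ) ≤ (V : ℝ) ^ β :=
        fun V hV h1V => IH V hV h1V
      have step1 : W p q U ≤ Wstar p q U + Wstar p q (U - 1) :=
        W_le_split p q U (by omega) (by omega) (by omega)
      have step2 := Wstar_le hp hq hpq U (by omega)
      have step3 := Wstar_le hp hq hpq (U - 1) (by omega)
      have hcombo : (W p q U : ℝ) ≤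
          (((if p ∣ U then W p q (U / p) else 0 : ℕ) : ℝ) +
            ((if p ∣ (U - 1) then W p q ((U - 1) / p) else 0 : ℕ) : ℝ)) +
          (((if q ∣ U then W p q (U / q) else 0 : ℕ) : ℝ) +
            ((if q ∣ (U - 1) then W p q ((U - 1) / q) else 0 : ℕ) : ℝ)) := by
        have : W p q U ≤
            ((if p ∣ U then W p q (U / p) else 0) + (if p ∣ (U - 1) then W p q ((U - 1) / p) else 0)) +
            ((if q ∣ U then W p q (U / q) else 0) + (if q ∣ (U - 1) then W p q ((U - 1) / q) else 0)) := by
          omega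
        exact_mod_cast this
      have hb1 := pair_term_bound hp hq hβ hU2 IH' p hp
      have hb2 := pair_term_bound hp hq hβ hU2 IH' q hq
      have hUb : (0:ℝ) < (U : ℝ) ^ β := Real.rpow_pos_of_pos (by positivity) β
      calc (W p q U : ℝ) ≤ _ := hcombo
        _ ≤ (U : ℝ) ^ β / (p : ℝ) ^ β + (U : ℝ) ^ β / (q : ℝ) ^ β := add_le_add hb1 hb2
        _ = (U : ℝ) ^ β * (1 / (p : ℝ) ^ β + 1 / (q : ℝ) ^ β) := by ring
        _ = (U : ℝ) ^ β := by rw [heq, mul_one]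


theorem W_upper_bound (p q : ℕ) (hp : 1 < p) (hq : 1 < q) (hpq : Nat.Coprime p q) :
    (∃! β : ℝ, β ∈ Set.Ioo (0 : ℝ) 1 ∧
      1 / (p : ℝ) ^ β + 1 / (q : ℝ) ^ β = 1) ∧
    ∀ β : ℝ, β ∈ Set.Ioo (0 : ℝ) 1 → 1 / (p : ℝ) ^ β + 1 / (q : ℝ) ^ β = 1 →
      ∀ U : ℕ, 1 ≤ U → (W p q U : ℝ) ≤ (U : ℝ) ^ β := by
  refine ⟨beta_exists p q hp hq hpq, ?_⟩
  intro β hβ heq U hU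
  exact main_bound hp hq hpq hβ heq U hU
end

section
/- For (p,q) = (2,3) and every nonnegative integer U: W(U) = 1 if and only if U ∈ {0,1} or U = 3·2^a − 1 for some nonnegative integer a. -/
namespace SCPaux

lemma pos_of_form {l : List ℕ} (hf : ∀ x ∈ l, ∃ a b : ℕ, x = 2 ^ a * 3 ^ b) :
    ∀ x ∈ l, 0 < x := by
  intro x hx
  obtain ⟨a, b, rfl⟩ := hf x hx
  positivity

lemma pos_of_mem {U : ℕ} {l : List ℕ} (h : l ∈ Omega 2 3 U) :
    ∀ x ∈ l, 0 < x := pos_of_form h.1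

lemma sum_map_const_mul (c : ℕ) (l : List ℕ) : (l.map (c * ·)).sum = c * l.sum := by
  induction l with
  | nil => simp
  | cons x t ih => simp [ih, Nat.mul_add]

lemma omega_map_two {U : ℕ} {l : List ℕ} (h : l ∈ Omega 2 3 U) :
    l.map (2 * ·) ∈ Omega 2 3 (2 * U) := by
  obtain ⟨hf, hc, hs⟩ := h
  refine ⟨?_, ?_, ?_⟩
  · intro x hx
    obtain ⟨y, hy, rfl⟩ := List.mem_map.mp hx
    obtain ⟨a, b, rfl⟩ := hf y hy
    exact ⟨a + 1, b, by ring⟩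
  · simp only [List.Chain']
    rw [List.isChain_map]
    exact hc.imp (fun a b hab => ⟨mul_dvd_mul_left 2 hab.1, by omega⟩)
  · rw [sum_map_const_mul, hs]

lemma omega_map_three {U : ℕ} {l : List ℕ} (h : l ∈ Omega 2 3 U) :
    l.map (3 * ·) ∈ Omega 2 3 (3 * U) := by
  obtain ⟨hf, hc, hs⟩ := h
  refine ⟨?_, ?_, ?_⟩
  · intro x hx
    obtain ⟨y, hy, rfl⟩ := List.mem_map.mp hx
    obtain ⟨a, b, rfl⟩ := hf y hy
    exact ⟨a, b + 1, by ring⟩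
  · simp only [List.Chain']
    rw [List.isChain_map]
    exact hc.imp (fun a b hab => ⟨mul_dvd_mul_left 3 hab.1, by omega⟩)
  · rw [sum_map_const_mul, hs]

lemma omega_append_one {U : ℕ} {l : List ℕ} (h : l ∈ Omega 2 3 U)
    (h2 : ∀ x ∈ l, 2 ≤ x) : l ++ [1] ∈ Omega 2 3 (U + 1) := by
  obtain ⟨hf, hc, hs⟩ := h
  refine ⟨?_, ?_, by simp [hs]⟩
  · intro x hx
    rcases List.mem_append.mp hx with h | h
    · exact hf x h
    · simp only [List.mem_singleton] at h
      exact ⟨0, 0, by simp [h]⟩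
  · refine hc.append (List.isChain_singleton 1) ?_
    intro x hx y hy
    simp only [List.head?_cons, Option.mem_def, Option.some.injEq] at hy
    subst hy
    obtain ⟨hne, rfl⟩ := List.mem_getLast?_eq_getLast hx
    exact ⟨one_dvd _, h2 _ (List.getLast_mem hne)⟩

/-- existence of a partition into powers of two (binary representation). -/
lemma exists_pow2 (U : ℕ) :
    ∃ l, l ∈ Omega 2 3 U ∧ ∀ x ∈ l, ∃ a : ℕ, x = 2 ^ a := by
  induction U using Nat.strong_induction_on with
  | _ U ih =>
  rcases Nat.eq_zero_or_pos U with rfl | hU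
  · exact ⟨[], ⟨by simp, List.isChain_nil, rfl⟩, by simp⟩
  rcases Nat.even_or_odd U with ⟨V, hV⟩ | ⟨V, hV⟩
  · obtain ⟨l, hl, hp⟩ := ih V (by omega)
    have h1 := omega_map_two hl
    rw [show 2 * V = U by omega] at h1
    refine ⟨l.map (2 * ·), h1, ?_⟩
    intro x hx
    obtain ⟨y, hy, rfl⟩ := List.mem_map.mp hx
    obtain ⟨a, rfl⟩ := hp y hy
    exact ⟨a + 1, by ring⟩
  · obtain ⟨l, hl, hp⟩ := ih V (by omega)
    have h1 := omega_map_two hl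
    have h2 : ∀ x ∈ l.map (2 * ·), 2 ≤ x := by
      intro x hx
      obtain ⟨y, hy, rfl⟩ := List.mem_map.mp hx
      have := pos_of_mem hl y hy
      omega
    have h3 := omega_append_one h1 h2
    rw [show 2 * V + 1 = U by omega] at h3
    refine ⟨l.map (2 * ·) ++ [1], h3, ?_⟩
    intro x hx
    rcases List.mem_append.mp hx with h | h
    · obtain ⟨y, hy, rfl⟩ := List.mem_map.mp h
      obtain ⟨a, rfl⟩ := hp y hy
      exact ⟨a + 1, by ring⟩
    · simp only [List.mem_singleton] at h
      exact ⟨0, by simp [h]⟩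

lemma nonempty_of_mem {U : ℕ} {l : List ℕ} (h : l ∈ Omega 2 3 U) (hU : U ≠ 0) :
    l ≠ [] := by
  intro he
  apply hU
  rw [← h.2.2, he, List.sum_nil]

instance : IsTrans ℕ (fun x y : ℕ => y ∣ x ∧ y < x) :=
  ⟨fun _ _ _ h1 h2 => ⟨h2.1.trans h1.1, h2.2.trans h1.2⟩⟩

/-- in a chained list the last element divides, and is less than, every earlier one -/
lemma getLast_rel {l : List ℕ} (hc : List.Chain' (fun x y : ℕ => y ∣ x ∧ y < x) l)
    (hne : l ≠ []) :
    ∀ x ∈ l.dropLast, l.getLast hne ∣ x ∧ l.getLast hne < x := by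
  simp only [List.Chain'] at hc
  rw [List.isChain_iff_pairwise] at hc
  conv at hc => rw [← List.dropLast_append_getLast hne]
  rw [List.pairwise_append] at hc
  intro x hx
  exact hc.2.2 x hx _ (List.mem_singleton_self _)

lemma getLast_dvd {l : List ℕ} (hc : List.Chain' (fun x y : ℕ => y ∣ x ∧ y < x) l)
    (hne : l ≠ []) : ∀ x ∈ l, l.getLast hne ∣ x := by
  intro x hx
  conv at hx => rw [← List.dropLast_append_getLast hne]
  rcases List.mem_append.mp hx with h | h
  · exact (getLast_rel hc hne x h).1
  · simp only [List.mem_singleton] at h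
    exact h ▸ dvd_rfl

lemma getLast_dvd_sum {l : List ℕ} (hc : List.Chain' (fun x y : ℕ => y ∣ x ∧ y < x) l)
    (hne : l ≠ []) : l.getLast hne ∣ l.sum :=
  List.dvd_sum (getLast_dvd hc hne)

lemma eq_one_of_form {x : ℕ} (hf : ∃ a b : ℕ, x = 2 ^ a * 3 ^ b)
    (h2 : ¬ 2 ∣ x) (h3 : ¬ 3 ∣ x) : x = 1 := by
  obtain ⟨a, b, rfl⟩ := hf
  rcases a with _ | a
  · rcases b with _ | b
    · simp
    · exact absurd ⟨2 ^ 0 * 3 ^ b, by ring⟩ h3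
  · exact absurd ⟨2 ^ a * 3 ^ b, by ring⟩ h2

lemma two_dvd_of_form {x : ℕ} (hf : ∃ a b : ℕ, x = 2 ^ a * 3 ^ b)
    (h3 : ¬ 3 ∣ x) (hx : 2 ≤ x) : 2 ∣ x := by
  obtain ⟨a, b, rfl⟩ := hf
  rcases b with _ | b
  · rcases a with _ | a
    · simp at hx
    · exact ⟨2 ^ a * 3 ^ 0, by ring⟩
  · exact absurd ⟨2 ^ a * 3 ^ b, by ring⟩ h3

/-- halving an all-even chained partition -/
lemma halve {U : ℕ} {l : List ℕ} (h : l ∈ Omega 2 3 U) (he : ∀ x ∈ l, 2 ∣ x) :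
    ∃ m, l = m.map (2 * ·) ∧ m ∈ Omega 2 3 m.sum ∧ U = 2 * m.sum := by
  obtain ⟨hf, hc, hs⟩ := h
  have hmap : (l.map (· / 2)).map (2 * ·) = l := by
    rw [List.map_map]
    conv_rhs => rw [← List.map_id l]
    refine List.map_congr_left (fun x hx => ?_)
    have := he x hx
    simp only [Function.comp_apply, id]
    omega
  refine ⟨l.map (· / 2), hmap.symm, ⟨?_, ?_, rfl⟩, ?_⟩
  · intro x hx
    obtain ⟨y, hy, rfl⟩ := List.mem_map.mp hx
    obtain ⟨a, b, hab⟩ := hf y hy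
    have h2 := he y hy
    rcases a with _ | a
    · exfalso
      rw [hab] at h2
      simp only [pow_zero, one_mul] at h2
      have := Nat.Prime.dvd_of_dvd_pow Nat.prime_two h2
      omega
    · refine ⟨a, b, ?_⟩
      rw [hab, show 2 ^ (a + 1) * 3 ^ b = 2 * (2 ^ a * 3 ^ b) by ring,
        Nat.mul_div_cancel_left _ (by norm_num : (0:ℕ) < 2)]
  · have hc2 : List.Chain' (fun x y : ℕ => y ∣ x ∧ y < x) ((l.map (· / 2)).map (2 * ·)) := by
      rw [hmap]; exact hc
    simp only [List.Chain'] at hc2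
    rw [List.isChain_map] at hc2
    exact hc2.imp (fun a b hab => ⟨(mul_dvd_mul_iff_left (two_ne_zero)).mp hab.1, by omega⟩)
  · rw [← hs]
    conv_lhs => rw [← hmap]
    rw [sum_map_const_mul]

/-- the canonical partition of `3 * 2 ^ a - 1` -/
def C : ℕ → List ℕ
  | 0 => [2]
  | a + 1 => (C a).map (2 * ·) ++ [1]

lemma C_mem : ∀ a : ℕ, C a ∈ Omega 2 3 (3 * 2 ^ a - 1) := by
  intro a
  induction a with
  | zero =>
    show [2] ∈ Omega 2 3 (3 * 2 ^ 0 - 1)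
    refine ⟨?_, List.isChain_singleton 2, by norm_num⟩
    intro x hx
    simp only [List.mem_singleton] at hx
    exact ⟨1, 0, by simp [hx]⟩
  | succ a ih =>
    have h1 := omega_map_two ih
    have h2 : ∀ x ∈ (C a).map (2 * ·), 2 ≤ x := by
      intro x hx
      obtain ⟨y, hy, rfl⟩ := List.mem_map.mp hx
      have := pos_of_mem ih y hy
      omega
    have h3 := omega_append_one h1 h2
    have hk : 1 ≤ 2 ^ a := Nat.one_le_pow a 2 (by norm_num)
    have heq : 2 * (3 * 2 ^ a - 1) + 1 = 3 * 2 ^ (a + 1) - 1 := by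
      rw [pow_succ]; omega
    rw [heq] at h3
    exact h3

lemma sum_ne_one {l : List ℕ} (h2 : ∀ x ∈ l, 2 ≤ x) : l.sum ≠ 1 := by
  cases l with
  | nil => simp
  | cons x t =>
    have := h2 x (List.mem_cons_self (a := x) (l := t))
    simp only [List.sum_cons]
    omega

lemma eq_nil_of_sum_eq_zero {l : List ℕ} (hp : ∀ x ∈ l, 0 < x) (hs : l.sum = 0) :
    l = [] := by
  cases l with
  | nil => rfl
  | cons x t =>
    have := hp x (List.mem_cons_self (a := x) (l := t))
    simp only [List.sum_cons] at hs
    omega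

lemma unique_zero {l : List ℕ} (h : l ∈ Omega 2 3 0) : l = [] :=
  eq_nil_of_sum_eq_zero (pos_of_mem h) h.2.2

lemma unique_one {l : List ℕ} (h : l ∈ Omega 2 3 1) : l = [1] := by
  obtain ⟨hf, hc, hs⟩ := h
  cases l with
  | nil => simp at hs
  | cons x t =>
    have hx : 0 < x := pos_of_form hf x (List.mem_cons_self (a := x) (l := t))
    have htp : ∀ y ∈ t, 0 < y := fun y hy =>
      pos_of_form hf y (List.mem_cons_of_mem x hy)
    simp only [List.sum_cons] at hs
    have hx1 : x = 1 := by
      have h0 : 0 ≤ t.sum := Nat.zero_le _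
      omega
    have ht0 : t.sum = 0 := by omega
    rw [eq_nil_of_sum_eq_zero htp ht0, hx1]

lemma unique_C : ∀ a : ℕ, ∀ l ∈ Omega 2 3 (3 * 2 ^ a - 1), l = C a := by
  intro a
  induction a with
  | zero =>
    intro l hl
    obtain ⟨hf, hc, hs⟩ := hl
    have hs2 : l.sum = 2 := by rw [hs]; norm_num
    have hne : l ≠ [] := by
      intro he; rw [he] at hs2; simp at hs2
    have hdvd : l.getLast hne ∣ 2 := hs2 ▸ getLast_dvd_sum hc hne
    rcases (Nat.dvd_prime Nat.prime_two).mp hdvd with hd1 | hd2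
    · exfalso
      have hrel := getLast_rel hc hne
      have hsum : l.dropLast.sum + l.getLast hne = 2 := by
        have h2 : (l.dropLast ++ [l.getLast hne]).sum = 2 := by
          rw [List.dropLast_append_getLast hne, hs2]
        simpa using h2
      rw [hd1] at hsum
      have h2 : ∀ x ∈ l.dropLast, 2 ≤ x := fun x hx => by
        have := (hrel x hx).2; omega
      exact sum_ne_one h2 (by omega)
    · have hall := getLast_dvd hc hne
      cases l with
      | nil => exact absurd rfl hne
      | cons x t =>
        have hx2 : 2 ∣ x := hd2 ▸ hall x (List.mem_cons_self (a := x) (l := t))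
        have htp : ∀ y ∈ t, 0 < y := fun y hy =>
          pos_of_form hf y (List.mem_cons_of_mem x hy)
        simp only [List.sum_cons] at hs2
        have hxpos : 0 < x := pos_of_form hf x (List.mem_cons_self (a := x) (l := t))
        have hx : x = 2 := by
          rcases hx2 with ⟨c, rfl⟩
          omega
        have ht0 : t.sum = 0 := by omega
        rw [eq_nil_of_sum_eq_zero htp ht0, hx]
        rfl
  | succ a ih =>
    intro l hl
    obtain ⟨hf, hc, hs⟩ := hl
    have hk : 1 ≤ 2 ^ a := Nat.one_le_pow a 2 (by norm_num)
    have hU : l.sum = 6 * 2 ^ a - 1 := by rw [hs, pow_succ]; omega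
    have hne : l ≠ [] := by
      intro he; rw [he] at hU; simp at hU; omega
    have hdvd : l.getLast hne ∣ 6 * 2 ^ a - 1 := hU ▸ getLast_dvd_sum hc hne
    have hdmem : l.getLast hne ∈ l := List.getLast_mem hne
    have hd1 : l.getLast hne = 1 := by
      apply eq_one_of_form (hf _ hdmem)
      · intro h2
        rcases h2.trans hdvd with ⟨c, hcc⟩; omega
      · intro h3
        rcases h3.trans hdvd with ⟨c, hcc⟩; omega
    have hsplit : l.dropLast ++ [1] = l := by
      rw [← hd1]; exact List.dropLast_append_getLast hne
    have hrel := getLast_rel hc hne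
    have h2 : ∀ x ∈ l.dropLast, 2 ≤ x := fun x hx => by
      have h := (hrel x hx).2; rw [hd1] at h; omega
    have hsum' : l.dropLast.sum = 6 * 2 ^ a - 2 := by
      have h3 : (l.dropLast ++ [1]).sum = 6 * 2 ^ a - 1 := by rw [hsplit, hU]
      simp only [List.sum_append, List.sum_cons, List.sum_nil] at h3
      omega
    have hc' : List.Chain' (fun x y : ℕ => y ∣ x ∧ y < x) l.dropLast := by
      have h4 := hc
      rw [← hsplit] at h4
      exact h4.left_of_append
    have hf' : ∀ x ∈ l.dropLast, ∃ a b : ℕ, x = 2 ^ a * 3 ^ b := fun x hx =>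
      hf x (by rw [← hsplit]; exact List.mem_append_left _ hx)
    have hmem' : l.dropLast ∈ Omega 2 3 (6 * 2 ^ a - 2) := ⟨hf', hc', hsum'⟩
    have hne' : l.dropLast ≠ [] := nonempty_of_mem hmem' (by omega)
    have hdvd' : l.dropLast.getLast hne' ∣ 6 * 2 ^ a - 2 :=
      hsum' ▸ getLast_dvd_sum hc' hne'
    have hd'mem : l.dropLast.getLast hne' ∈ l.dropLast := List.getLast_mem hne'
    have hd'2 : 2 ∣ l.dropLast.getLast hne' := by
      apply two_dvd_of_form (hf' _ hd'mem)
      · intro h3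
        rcases h3.trans hdvd' with ⟨c, hcc⟩; omega
      · exact h2 _ hd'mem
    have heven : ∀ x ∈ l.dropLast, 2 ∣ x := fun x hx =>
      hd'2.trans (getLast_dvd hc' hne' x hx)
    obtain ⟨m, hm1, hm2, hm3⟩ := halve hmem' heven
    have hmsum : m.sum = 3 * 2 ^ a - 1 := by omega
    have hmc : m = C a := ih m (by rwa [← hmsum])
    show l = C (a + 1)
    rw [← hsplit, hm1, hmc]
    rfl

/-- two distinct chained partitions exist for U not of the special form -/
lemma two_parts : ∀ U : ℕ, U ≠ 0 → U ≠ 1 → (∀ a : ℕ, U ≠ 3 * 2 ^ a - 1) →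
    ∃ l₁ l₂, l₁ ∈ Omega 2 3 U ∧ l₂ ∈ Omega 2 3 U ∧ l₁ ≠ l₂ := by
  intro U
  induction U using Nat.strong_induction_on with
  | _ U ih =>
  intro h0 h1 hforms
  have hU2 : U ≠ 2 := fun h => hforms 0 (by simp [h])
  have hU3 : 3 ≤ U := by omega
  have pow2_not_three_dvd : ∀ (x : ℕ), (∃ a : ℕ, x = 2 ^ a) → ¬ 3 ∣ x := by
    rintro x ⟨a, rfl⟩ h3
    have := Nat.Prime.dvd_of_dvd_pow Nat.prime_three h3
    omega
  have hmod : U % 3 = 0 ∨ U % 3 = 1 ∨ U % 3 = 2 := by omega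
  rcases hmod with hm | hm | hm
  · obtain ⟨l₁, hl₁, hp₁⟩ := exists_pow2 U
    obtain ⟨V, hV⟩ : ∃ V, U = 3 * V := ⟨U / 3, by omega⟩
    have hVpos : V ≠ 0 := by omega
    obtain ⟨lV, hlV, _⟩ := exists_pow2 V
    have hl₂ : lV.map (3 * ·) ∈ Omega 2 3 U := by
      have := omega_map_three hlV
      rwa [show 3 * V = U by omega] at this
    refine ⟨l₁, lV.map (3 * ·), hl₁, hl₂, ?_⟩
    intro heq
    have hneV : lV ≠ [] := nonempty_of_mem hlV hVpos
    obtain ⟨y, hy⟩ := List.exists_mem_of_ne_nil lV hneV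
    have hmem : 3 * y ∈ l₁ := by
      rw [heq]; exact List.mem_map_of_mem (f := (3 * ·)) hy
    exact pow2_not_three_dvd _ (hp₁ _ hmem) ⟨y, rfl⟩
  · obtain ⟨l₁, hl₁, hp₁⟩ := exists_pow2 U
    obtain ⟨V, hV⟩ : ∃ V, U = 3 * V + 1 := ⟨U / 3, by omega⟩
    have hVpos : V ≠ 0 := by omega
    obtain ⟨lV, hlV, _⟩ := exists_pow2 V
    have hmap := omega_map_three hlV
    have hge : ∀ x ∈ lV.map (3 * ·), 2 ≤ x := by
      intro x hx
      obtain ⟨y, hy, rfl⟩ := List.mem_map.mp hx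
      have := pos_of_mem hlV y hy; omega
    have hl₂ : lV.map (3 * ·) ++ [1] ∈ Omega 2 3 U := by
      have := omega_append_one hmap hge
      rwa [show 3 * V + 1 = U by omega] at this
    refine ⟨l₁, lV.map (3 * ·) ++ [1], hl₁, hl₂, ?_⟩
    intro heq
    have hneV : lV ≠ [] := nonempty_of_mem hlV hVpos
    obtain ⟨y, hy⟩ := List.exists_mem_of_ne_nil lV hneV
    have hmem : 3 * y ∈ l₁ := by
      rw [heq]; exact List.mem_append_left _ (List.mem_map_of_mem (f := (3 * ·)) hy)
    exact pow2_not_three_dvd _ (hp₁ _ hmem) ⟨y, rfl⟩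
  · rcases Nat.even_or_odd U with ⟨V, hV⟩ | ⟨V, hV⟩
    · have hV4 : 4 ≤ V := by omega
      obtain ⟨l₁, l₂, hl₁, hl₂, hne⟩ := ih V (by omega) (by omega) (by omega)
        (fun a h => by
          have hk : 1 ≤ 2 ^ a := Nat.one_le_pow a 2 (by norm_num)
          omega)
      have lift : ∀ {l : List ℕ}, l ∈ Omega 2 3 V → l.map (2 * ·) ∈ Omega 2 3 U := by
        intro l hl
        have := omega_map_two hl
        rwa [show 2 * V = U by omega] at this
      refine ⟨l₁.map (2 * ·), l₂.map (2 * ·), lift hl₁, lift hl₂, ?_⟩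
      intro heq
      exact hne (List.map_injective_iff.mpr (fun a b h => by omega) heq)
    · have hV2 : 2 ≤ V := by omega
      obtain ⟨l₁, l₂, hl₁, hl₂, hne⟩ := ih V (by omega) (by omega) (by omega)
        (fun a h => by
          apply hforms (a + 1)
          have hk : 1 ≤ 2 ^ a := Nat.one_le_pow a 2 (by norm_num)
          rw [pow_succ]
          omega)
      have lift : ∀ {l : List ℕ}, l ∈ Omega 2 3 V →
          l.map (2 * ·) ++ [1] ∈ Omega 2 3 U := by
        intro l hl
        have hm := omega_map_two hl
        have hge : ∀ x ∈ l.map (2 * ·), 2 ≤ x := by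
          intro x hx
          obtain ⟨y, hy, rfl⟩ := List.mem_map.mp hx
          have := pos_of_mem hl y hy; omega
        have := omega_append_one hm hge
        rwa [show 2 * V + 1 = U by omega] at this
      refine ⟨l₁.map (2 * ·) ++ [1], l₂.map (2 * ·) ++ [1], lift hl₁, lift hl₂, ?_⟩
      intro heq
      have h5 := List.append_cancel_right heq
      exact hne (List.map_injective_iff.mpr (fun a b h => by omega) h5)

end SCPaux

open SCPaux in
theorem W_eq_one_iff (U : ℕ) :
    W 2 3 U = 1 ↔ U = 0 ∨ U = 1 ∨ ∃ a : ℕ, U = 3 * 2 ^ a - 1 := by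
  constructor
  · intro h
    by_contra hc
    push_neg at hc
    obtain ⟨h0, h1, hforms⟩ := hc
    obtain ⟨l₁, l₂, hl₁, hl₂, hne⟩ := two_parts U h0 h1 (fun a => hforms a)
    obtain ⟨l0, hl0⟩ := Set.ncard_eq_one.mp h
    rw [hl0] at hl₁ hl₂
    exact hne (hl₁.trans hl₂.symm)
  · intro h
    have key : ∃ l0, Omega 2 3 U = {l0} := by
      rcases h with rfl | rfl | ⟨a, rfl⟩
      · exact ⟨[], Set.eq_singleton_iff_unique_mem.mpr
          ⟨⟨by simp, List.isChain_nil, rfl⟩, fun l hl => unique_zero hl⟩⟩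
      · refine ⟨[1], Set.eq_singleton_iff_unique_mem.mpr
          ⟨⟨?_, List.isChain_singleton 1, by simp⟩, fun l hl => unique_one hl⟩⟩
        intro x hx
        simp only [List.mem_singleton] at hx
        exact ⟨0, 0, by simp [hx]⟩
      · exact ⟨C a, Set.eq_singleton_iff_unique_mem.mpr
          ⟨C_mem a, fun l hl => unique_C a l hl⟩⟩
    obtain ⟨l0, hl0⟩ := key
    rw [W, hl0, Set.ncard_singleton]
end
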